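/- Let n ≥ 1, p > 1, α > 0, ψ₀ > 0. Let λ : [0,T] → ℝ be a differentiable positive function with λ'(t) ≥ αp·ψ(t)·λ(t), where ψ(t) = ψ₀/(1 - (2/n)·ψ₀·t) and 1 - (2/n)·ψ₀·t > 0 on [0,T]. Then the function t ↦ λ(t)·(ψ₀⁻¹ - (2/n)·t)^{αnp/2} is monotone nondecreasing on [0,T]. -/

import Mathlib

open Real Set

theorem stmt6 (n : ℕ) (hn : 1 ≤ n) (T p α ψ₀ : ℝ) (hT : 0 ≤ T) (hp : 1 < p)
    (hα : 0 < α) (hψ₀ : 0 < ψ₀)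
    (lam lam' : ℝ → ℝ)
    (hpos : ∀ t ∈ Icc (0:ℝ) T, 0 < lam t)
    (hderiv : ∀ t ∈ Icc (0:ℝ) T, HasDerivAt lam (lam' t) t)
    (hbar : ∀ t ∈ Icc (0:ℝ) T, 1 - (2 / (n:ℝ)) * ψ₀ * t > 0)
    (hineq : ∀ t ∈ Icc (0:ℝ) T,
      lam' t ≥ α * p * (ψ₀ / (1 - (2 / (n:ℝ)) * ψ₀ * t)) * lam t) :
    MonotoneOn (fun t => lam t * (ψ₀⁻¹ - (2 / (n:ℝ)) * t) ^ (α * n * p / 2)) (Icc 0 T) := by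
  have hn' : (0:ℝ) < n := by exact_mod_cast hn
  set c : ℝ := α * n * p / 2 with hc
  have hb : ∀ t ∈ Icc (0:ℝ) T, 0 < ψ₀⁻¹ - (2 / (n:ℝ)) * t := by
    intro t ht
    have h1 := hbar t ht
    have : ψ₀⁻¹ - (2 / (n:ℝ)) * t = (1 - (2 / (n:ℝ)) * ψ₀ * t) / ψ₀ := by
      field_simp
    rw [this]
    positivity
  have hF : ∀ t ∈ Icc (0:ℝ) T,
      HasDerivAt (fun t => lam t * (ψ₀⁻¹ - (2 / (n:ℝ)) * t) ^ c)
        (lam' t * (ψ₀⁻¹ - (2 / (n:ℝ)) * t) ^ c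
          + lam t * (-(2 / (n:ℝ)) * c * (ψ₀⁻¹ - (2 / (n:ℝ)) * t) ^ (c - 1))) t := by
    intro t ht
    have hB : HasDerivAt (fun t : ℝ => ψ₀⁻¹ - (2 / (n:ℝ)) * t) (-(2 / (n:ℝ))) t := by
      simpa using ((hasDerivAt_id t).const_mul (2 / (n:ℝ))).const_sub ψ₀⁻¹
    have hBc := hB.rpow_const (p := c) (Or.inl (hb t ht).ne')
    exact (hderiv t ht).mul hBc
  apply monotoneOn_of_deriv_nonneg (convex_Icc 0 T)
  · intro t ht
    exact ((hF t ht).continuousAt).continuousWithinAt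
  · intro t ht
    rw [interior_Icc] at ht
    exact ((hF t (Ioo_subset_Icc_self ht)).differentiableAt).differentiableWithinAt
  · intro t ht
    rw [interior_Icc] at ht
    have ht' : t ∈ Icc (0:ℝ) T := Ioo_subset_Icc_self ht
    rw [(hF t ht').deriv]
    have hbt := hb t ht'
    have hkey : lam' t * (ψ₀⁻¹ - (2 / (n:ℝ)) * t) ≥ α * p * lam t := by
      have h1 := hineq t ht'
      have h2 : α * p * (ψ₀ / (1 - (2 / (n:ℝ)) * ψ₀ * t)) * lam t
          = α * p * lam t / (ψ₀⁻¹ - (2 / (n:ℝ)) * t) := by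
        have h3 := hbar t ht'
        field_simp
      rw [h2] at h1
      rw [ge_iff_le, div_le_iff₀ hbt] at h1
      linarith
    have hsplit : (ψ₀⁻¹ - (2 / (n:ℝ)) * t) ^ c
        = (ψ₀⁻¹ - (2 / (n:ℝ)) * t) * (ψ₀⁻¹ - (2 / (n:ℝ)) * t) ^ (c - 1) := by
      rw [← Real.rpow_one_add' hbt.le (by
        intro h
        have : c = 0 := by linarith
        have : c > 0 := by rw [hc]; positivity
        linarith)]
      ring_nf
    rw [hsplit]
    have hcα : (2 / (n:ℝ)) * c = α * p := by
      rw [hc]; field_simp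
    have hrp : (0:ℝ) ≤ (ψ₀⁻¹ - (2 / (n:ℝ)) * t) ^ (c - 1) := Real.rpow_nonneg hbt.le _
    have hlam := hpos t ht'
    have : lam' t * ((ψ₀⁻¹ - (2 / (n:ℝ)) * t) * (ψ₀⁻¹ - (2 / (n:ℝ)) * t) ^ (c - 1))
          + lam t * (-(2 / (n:ℝ)) * c * (ψ₀⁻¹ - (2 / (n:ℝ)) * t) ^ (c - 1))
        = (lam' t * (ψ₀⁻¹ - (2 / (n:ℝ)) * t) - (2 / (n:ℝ)) * c * lam t)
            * (ψ₀⁻¹ - (2 / (n:ℝ)) * t) ^ (c - 1) := by ring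
    rw [this]
    apply mul_nonneg _ hrp
    rw [hcα]
    linarith
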